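/- Let G be a Polish topological group with topology σ. Suppose ω is a Hausdorff group topology on G coarser than σ, and suppose there is a bijective homomorphism f : G → H onto a Polish topological group H that is continuous when G carries the topology ω. Then ω = σ. -/

import Mathlib

open Set Filter Topology Pointwise Function

/-- In a Baire space, a nonempty open set is not meager. -/
lemma aux_not_isMeagre_of_isOpen {X : Type*} [TopologicalSpace X] [BaireSpace X]
    {U : Set X} (hU : IsOpen U) (hne : U.Nonempty) : ¬ IsMeagre U := by
  intro h
  have hd : Dense Uᶜ := dense_of_mem_residual h
  obtain ⟨x, hxc, hx⟩ := hd.exists_mem_open hU hne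
  exact hxc hx

lemma aux_isMeagre_diff {X : Type*} [TopologicalSpace X] {s t : Set X}
    (h : s =ᶠ[residual X] t) : IsMeagre (s \ t) := by
  refine Filter.mem_of_superset h ?_
  intro x hx
  simp only [Set.mem_setOf_eq, eq_iff_iff] at hx
  simp only [Set.mem_compl_iff, Set.mem_diff, not_and, not_not]
  intro hxs
  exact hx.mp hxs

lemma aux_isMeagre_smul {X : Type*} [TopologicalSpace X] [Group X] [IsTopologicalGroup X]
    {s : Set X} (g : X) (h : IsMeagre s) : IsMeagre (g • s) := by
  have : g • s = (Homeomorph.mulLeft g⁻¹) ⁻¹' s := by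
    ext x
    simp [Set.mem_smul_set_iff_inv_smul_mem]
  rw [this]
  exact h.preimage_of_isOpenMap (Homeomorph.mulLeft g⁻¹).continuous
    (Homeomorph.mulLeft g⁻¹).isOpenMap

/-- Pettis's lemma: a nonmeager Baire-measurable set `A` in a topological group which is
a Baire space satisfies that `A * A⁻¹` is a neighborhood of `1`. -/
lemma aux_pettis {X : Type*} [TopologicalSpace X] [Group X] [IsTopologicalGroup X] [BaireSpace X]
    {A : Set X} (hA : BaireMeasurableSet A) (hm : ¬ IsMeagre A) : A * A⁻¹ ∈ 𝓝 (1 : X) := by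
  obtain ⟨O, hO, hAO⟩ := hA.residualEq_isOpen
  have hOne : O.Nonempty := by
    rcases Set.eq_empty_or_nonempty O with h | h
    · exact absurd (by simpa [h] using aux_isMeagre_diff hAO) hm
    · exact h
  have hsub : O * O⁻¹ ⊆ A * A⁻¹ := by
    rintro g ⟨o₁, ho₁, o₂, ho₂', rfl⟩
    have ho₂ : o₂⁻¹ ∈ O := ho₂'
    set h : X := o₁ * o₂ with hh
    -- `O ∩ h • O` is nonempty open, hence nonmeager
    have hW : ¬ IsMeagre (O ∩ h • O) := by
      refine aux_not_isMeagre_of_isOpen (hO.inter (hO.smul h)) ⟨o₁, ho₁, ?_⟩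
      rw [Set.mem_smul_set_iff_inv_smul_mem]
      have : h⁻¹ • o₁ = o₂⁻¹ := by
        simp [hh, smul_eq_mul, mul_assoc]
      rw [this]
      exact ho₂
    have hmeag : IsMeagre ((O \ A) ∪ h • (O \ A)) := by
      have h1 : IsMeagre (O \ A) := aux_isMeagre_diff hAO.symm
      have h2 : IsMeagre (h • (O \ A)) := aux_isMeagre_smul h h1
      rw [IsMeagre, Set.compl_union]
      exact Filter.inter_mem h1 h2
    -- find a point of `A ∩ h • A`
    have hexists : (A ∩ h • A).Nonempty := by
      by_contra hem
      rw [Set.not_nonempty_iff_eq_empty] at hem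
      apply hW
      refine hmeag.mono ?_
      intro x ⟨hxO, hxhO⟩
      by_cases hxA : x ∈ A
      · by_cases hxhA : x ∈ h • A
        · exact absurd (Set.mem_inter hxA hxhA) (by simp [hem])
        · right
          obtain ⟨y, hyO, rfl⟩ := hxhO
          exact ⟨y, ⟨hyO, fun hyA => hxhA ⟨y, hyA, rfl⟩⟩, rfl⟩
      · exact Or.inl ⟨hxO, hxA⟩
    obtain ⟨a, haA, hahA⟩ := hexists
    obtain ⟨b, hbA, hba⟩ := hahA
    have : a * b⁻¹ = h := by rw [← hba]; simp [smul_eq_mul]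
    have hmem : a * b⁻¹ ∈ A * A⁻¹ := Set.mul_mem_mul haA (Set.inv_mem_inv.mpr hbA)
    rwa [this] at hmem
  have h1mem : (1 : X) ∈ O * O⁻¹ := by
    obtain ⟨o, ho⟩ := hOne
    have : o * o⁻¹ ∈ O * O⁻¹ := Set.mul_mem_mul ho (Set.inv_mem_inv.mpr ho)
    simpa using this
  exact Filter.mem_of_superset ((hO.inv.mul_left).mem_nhds h1mem) hsub

/-- Open mapping theorem for Polish groups: a continuous bijective homomorphism between Polish
groups is an open map. -/
lemma aux_openMapping {G H : Type*} [Group G] [Group H] [TopologicalSpace G] [TopologicalSpace H]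
    [IsTopologicalGroup G] [IsTopologicalGroup H] [PolishSpace G] [PolishSpace H]
    (f : G →* H) (hbij : Function.Bijective f) (hcont : Continuous f) : IsOpenMap f := by
  letI := TopologicalSpace.upgradeIsCompletelyMetrizable H
  borelize G H
  have key : ∀ U ∈ 𝓝 (1 : G), f '' U ∈ 𝓝 (1 : H) := by
    intro U hU
    obtain ⟨V, hVo, hV1, hVU⟩ := exists_open_nhds_one_mul_subset hU
    set W : Set G := V ∩ V⁻¹ with hW
    have hWo : IsOpen W := hVo.inter hVo.inv
    have hW1 : (1 : G) ∈ W := ⟨hV1, by simpa using hV1⟩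
    have hWsymm : W⁻¹ = W := by
      ext x; simp [hW, and_comm]
    have hWU : W * W ⊆ U := fun x ⟨a, ha, b, hb, hab⟩ => hVU ⟨a, ha.1, b, hb.1, hab⟩
    -- f '' W is Borel
    have hemb : MeasurableEmbedding f := hcont.measurableEmbedding hbij.1
    have hWmeas : MeasurableSet (f '' W) := hemb.measurableSet_image.2 hWo.measurableSet
    -- countable dense set
    obtain ⟨D, hDc, hDd⟩ := TopologicalSpace.exists_countable_dense G
    -- H is covered by translates of f '' W
    have hcover : (Set.univ : Set H) ⊆ ⋃ d ∈ D, f d • (f '' W) := by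
      intro y _
      obtain ⟨g, rfl⟩ := hbij.2 y
      have : (g • W).Nonempty := ⟨g, by simpa using Set.smul_mem_smul_set (a := g) hW1⟩
      obtain ⟨d, hdD, hdg⟩ := hDd.exists_mem_open (hWo.smul g) this
      obtain ⟨w, hwW, hw⟩ := hdg
      refine Set.mem_biUnion hdD ?_
      refine ⟨f w⁻¹, ⟨w⁻¹, by rwa [← hWsymm, Set.mem_inv, inv_inv], rfl⟩, ?_⟩
      have hd : d = g * w := by rw [← hw]; simp [smul_eq_mul]
      show f d * f w⁻¹ = f g
      rw [hd, ← map_mul, mul_inv_cancel_right]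
    -- f '' W is not meager
    have hnm : ¬ IsMeagre (f '' W) := by
      intro hmeag
      have huniv : IsMeagre (Set.univ : Set H) := by
        refine IsMeagre.mono hcover ?_
        rw [IsMeagre, Set.compl_iUnion₂]
        exact (countable_bInter_mem hDc).2 fun d _ => aux_isMeagre_smul (f d) hmeag
      exact aux_not_isMeagre_of_isOpen isOpen_univ ⟨1, trivial⟩ huniv
    -- Pettis
    have hpettis : (f '' W) * (f '' W)⁻¹ ∈ 𝓝 (1 : H) :=
      aux_pettis hWmeas.baireMeasurableSet hnm
    have hinv : (f '' W)⁻¹ = f '' W := by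
      ext x
      constructor
      · rintro hx
        rw [Set.mem_inv] at hx
        obtain ⟨w, hwW, hw⟩ := hx
        exact ⟨w⁻¹, by rwa [← hWsymm, Set.mem_inv, inv_inv], by rw [map_inv, hw, inv_inv]⟩
      · rintro ⟨w, hwW, rfl⟩
        rw [Set.mem_inv]
        exact ⟨w⁻¹, by rwa [← hWsymm, Set.mem_inv, inv_inv], map_inv f w⟩
    refine Filter.mem_of_superset hpettis ?_
    rw [hinv, ← Set.image_mul f]
    exact Set.image_mono hWU
  -- conclude openness
  intro U hU
  rw [isOpen_iff_mem_nhds]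
  rintro _ ⟨x, hx, rfl⟩
  have h1 : x⁻¹ • U ∈ 𝓝 (1 : G) := by
    refine (hU.smul x⁻¹).mem_nhds ?_
    exact ⟨x, hx, by simp⟩
  have h2 : f '' (x⁻¹ • U) ∈ 𝓝 (1 : H) := key _ h1
  have h3 : (⇑(Homeomorph.mulLeft (f x))) '' (f '' (x⁻¹ • U)) ∈ 𝓝 (f x) := by
    have h4 := (Homeomorph.mulLeft (f x)).isOpenMap.image_mem_nhds h2
    rwa [show (Homeomorph.mulLeft (f x)) (1 : H) = f x by simp] at h4
  refine Filter.mem_of_superset h3 ?_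
  rintro _ ⟨_, ⟨v, hvU, rfl⟩, rfl⟩
  obtain ⟨u, huU, rfl⟩ := hvU
  refine ⟨u, huU, ?_⟩
  show f u = f x * f (x⁻¹ • u)
  rw [smul_eq_mul, ← map_mul, mul_inv_cancel_left]

theorem stmt0 {G H : Type*} [Group G] [Group H]
    (σ ω : TopologicalSpace G)
    (hσgrp : @IsTopologicalGroup G σ _) (hσpol : @PolishSpace G σ)
    (hωgrp : @IsTopologicalGroup G ω _) (hωt2 : @T2Space G ω)
    (hcoarser : σ ≤ ω)
    [TopologicalSpace H] [IsTopologicalGroup H] [PolishSpace H]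
    (f : G →* H) (hbij : Function.Bijective f)
    (hcont : @Continuous G H ω _ f) :
    ω = σ := by
  have hid : Continuous[σ, ω] id := continuous_id_of_le hcoarser
  have hfσ : Continuous[σ, _] ⇑f := @Continuous.comp G G H σ ω _ id ⇑f hcont hid
  have hopen : @IsOpenMap G H σ _ f :=
    @aux_openMapping G H _ _ σ _ hσgrp _ hσpol _ f hbij hfσ
  refine le_antisymm ?_ hcoarser
  rw [TopologicalSpace.le_def]
  intro U hU
  have : f '' U ∈ {s : Set H | IsOpen s} := hopen U hU
  have hpre : U = f ⁻¹' (f '' U) := (Set.preimage_image_eq U hbij.1).symm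
  rw [hpre]
  exact hcont.isOpen_preimage _ this
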